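/- In the Verma module relation: for λ ∈ X⁺ dominant, the induced U-module map φ'_λ : M_0 ⊗ M_λ → K'(d) sending x·ξ_0 ⊗ ξ_λ to θ^d·x kills M_0 ⊗ T_λ, where T_λ ⊆ M_λ is the left ideal generated by θ_i^{(i,λ)+1}; concretely, φ'_λ(y·ξ_0 ⊗ θ_i^{(m)}ξ_λ) = (Σ_{t=0}^m (−1)^t v^{−t(p−m)} θ_i^{(m−t)} θ^d θ_i^{(t)})·y with p = (i,λ)+1, and this vanishes when m = p. -/

import Mathlib

noncomputable section
open scoped Classical TensorProduct

/-- The field `ℚ(v)` of rational functions over `ℚ`. -/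
abbrev Kq : Type := RatFunc ℚ

/-- The indeterminate `v`. -/
def vq : Kq := RatFunc.X

/-- The quantum integer `[s] = (v^s - v^{-s})/(v - v⁻¹)`. -/
def qint (s : ℤ) : Kq := (vq ^ s - vq ^ (-s)) / (vq - vq⁻¹)

/-- The quantum factorial `[s]!`. -/
def qfact (n : ℕ) : Kq := ∏ k ∈ Finset.range n, qint (k + 1)

/-- The quantum binomial coefficient. -/
def qbinom (s t : ℕ) : Kq := qfact s / (qfact t * qfact (s - t))

/-- A finite graph without loops on vertex set `I`, recorded by the number
`E i j` of edges joining `i` and `j`. -/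
structure GraphData (I : Type) where
  E : I → I → ℕ
  symm : ∀ i j, E i j = E j i
  loopless : ∀ i, E i i = 0

variable {I : Type}

/-- The Cartan pairing `(i,j) = 2δ_{ij} − #{edges between i and j}`. -/
def cart (G : GraphData I) (i j : I) : ℤ := if i = j then 2 else -(G.E i j : ℤ)

/-- The pairing `(i, μ)` of a vertex with an element `μ ∈ ℕ[I]`. -/
def pairing (G : GraphData I) (i : I) (μ : I →₀ ℕ) : ℤ :=
  μ.sum fun j n => (n : ℤ) * cart G i j

/-- The quantum Serre relation element attached to `i ≠ j`. -/
def serreElem (G : GraphData I) (i j : I) : FreeAlgebra Kq I :=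
  ∑ p ∈ Finset.range (2 + G.E i j),
    (((-1 : Kq) ^ p) * qbinom (1 + G.E i j) p) •
      (FreeAlgebra.ι Kq i ^ p * FreeAlgebra.ι Kq j *
        FreeAlgebra.ι Kq i ^ (1 + G.E i j - p))

/-- The quantum Serre relations. -/
inductive SerreRel (G : GraphData I) : FreeAlgebra Kq I → FreeAlgebra Kq I → Prop
  | serre : ∀ i j, i ≠ j → SerreRel G (serreElem G i j) 0

/-- Lusztig's algebra `f = U⁻` attached to the graph `G`: the free algebra on the
generators `θ_i` modulo the quantum Serre relations. -/
abbrev UM (G : GraphData I) : Type := RingQuot (SerreRel G)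

/-- The generator `θ_i` of `U⁻`. -/
def θ (G : GraphData I) (i : I) : UM G :=
  RingQuot.mkAlgHom Kq (SerreRel G) (FreeAlgebra.ι Kq i)

/-- The monomial `θ_{i_1} ⋯ θ_{i_m}`. -/
def word (G : GraphData I) (l : List I) : UM G := (l.map (θ G)).prod

/-- The degree in `ℕ[I]` of a monomial. -/
def degw (l : List I) : I →₀ ℕ := (l.map fun i => Finsupp.single i 1).sum

/-- The homogeneous component of `U⁻` of degree `μ ∈ ℕ[I]`. -/
def homog (G : GraphData I) (μ : I →₀ ℕ) : Submodule Kq (UM G) :=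
  Submodule.span Kq {x | ∃ l : List I, degw l = μ ∧ x = word G l}

variable [DecidableEq I]

/-- The framed graph `Γ̃` of `Γ`: vertex set `I ⊔ I⁺`, with the edges of `Γ`
together with one new edge joining `i` and `i⁺` for each `i ∈ I`. -/
def framed (G : GraphData I) : GraphData (I ⊕ I) where
  E x y :=
    match x, y with
    | Sum.inl i, Sum.inl j => G.E i j
    | Sum.inl i, Sum.inr j => if i = j then 1 else 0
    | Sum.inr i, Sum.inl j => if i = j then 1 else 0
    | Sum.inr _, Sum.inr _ => 0
  symm := by
    rintro (i | i) (j | j)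
    · exact G.symm i j
    · by_cases h : i = j
      · subst h; rfl
      · simp [h, Ne.symm h]
    · by_cases h : i = j
      · subst h; rfl
      · simp [h, Ne.symm h]
    · rfl
  loopless := by
    rintro (i | i)
    · exact G.loopless i
    · rfl

/-- The divided power `θ_i^{(n)} = θ_i^n/[n]!`. -/
def θdiv {J : Type} (G : GraphData J) (i : J) (n : ℕ) : UM G := (qfact n)⁻¹ • θ G i ^ n

/-- The defining recursion for the `E_i`-action on the Verma module `M_λ`
realized on `U⁻` (for a graph `G` on a vertex set `J`): `E_i(ξ_λ) = 0` and
`E_i(θ_j x) = θ_j E_i(x) + δ_{ij}[(i, λ − |x|)]·x`. -/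
def IsVermaE {J : Type} (G : GraphData J) (lam : J → ℤ) (i : J)
    (Eop : UM G →ₗ[Kq] UM G) : Prop :=
  Eop 1 = 0 ∧
  ∀ (j : J) (μ : J →₀ ℕ) (x : UM G), x ∈ homog G μ →
    Eop (θ G j * x) =
      θ G j * Eop x + (if i = j then qint (lam i - pairing G i μ) else 0) • x

/-- The `K_i`-action on the Verma module `M_λ`: multiplication by `v^{(i,λ−ν)}`
on the homogeneous component of degree `ν`. -/
def IsVermaKp {J : Type} (G : GraphData J) (lam : J → ℤ) (i : J)
    (Kop : UM G →ₗ[Kq] UM G) : Prop :=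
  ∀ (μ : J →₀ ℕ) (x : UM G), x ∈ homog G μ →
    Kop x = vq ^ (lam i - pairing G i μ) • x

/-- The `K_{−i}`-action on the Verma module `M_λ`. -/
def IsVermaKm {J : Type} (G : GraphData J) (lam : J → ℤ) (i : J)
    (Kop : UM G →ₗ[Kq] UM G) : Prop :=
  ∀ (μ : J →₀ ℕ) (x : UM G), x ∈ homog G μ →
    Kop x = vq ^ (-(lam i - pairing G i μ)) • x

variable [Fintype I]

/-- The element `θ^d = Π_{i∈I} θ_{i⁺}^{(d_i)}` of `U⁻_{Γ̃}` (the factors commute,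
so the order is immaterial). -/
def θframe (G : GraphData I) (d : I → ℕ) : UM (framed G) :=
  ((Finset.univ.toList (α := I)).map fun j => θdiv (framed G) (Sum.inr j) (d j)).prod

section Scalars

lemma vq_ne_zero : vq ≠ 0 := RatFunc.X_ne_zero

lemma vq_pow_ne_one {n : ℕ} (hn : n ≠ 0) : vq ^ n ≠ 1 := by
  intro h
  have hX : (Polynomial.X : Polynomial ℚ) ^ n = 1 := by
    apply RatFunc.algebraMap_injective ℚ
    simpa [vq, RatFunc.algebraMap_X, map_pow] using h
  have := congrArg Polynomial.natDegree hX
  simp [Polynomial.natDegree_X_pow] at this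
  exact hn this

lemma qvsub_ne_zero : vq - vq⁻¹ ≠ 0 := by
  intro h
  have h2 : vq * vq = 1 := by
    have := sub_eq_zero.mp h
    field_simp [vq_ne_zero] at this
    linear_combination this
  exact vq_pow_ne_one (n := 2) (by norm_num) (by rw [pow_two]; exact h2)

lemma qint_mul_denom (s : ℤ) : qint s * (vq - vq⁻¹) = vq ^ s - vq ^ (-s) :=
  div_mul_cancel₀ _ qvsub_ne_zero

lemma qint_zero : qint 0 = 0 := by simp [qint]

lemma qint_one : qint 1 = 1 := by
  rw [qint, zpow_one, zpow_neg, zpow_one, div_self qvsub_ne_zero]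

lemma qint_ne_zero {s : ℤ} (hs : 0 < s) : qint s ≠ 0 := by
  intro h
  have h0 : vq ^ s - vq ^ (-s) = 0 := by
    rw [← qint_mul_denom, h, zero_mul]
  have h1 : vq ^ (2 * s) = 1 := by
    have := sub_eq_zero.mp h0
    have h2 : vq ^ s * vq ^ s = vq ^ s * vq ^ (-s) := by rw [← this]
    have h3 : vq ^ s * vq ^ (-s) = 1 := by
      rw [← zpow_add₀ vq_ne_zero]; simp
    rw [h3] at h2
    rw [two_mul, zpow_add₀ vq_ne_zero]; exact h2
  have : vq ^ (2 * s).toNat = 1 := by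
    rw [← zpow_natCast, Int.toNat_of_nonneg (by omega)]; exact h1
  exact vq_pow_ne_one (by omega) this

lemma qfact_succ (n : ℕ) : qfact (n + 1) = qfact n * qint (n + 1) := by
  rw [qfact, Finset.prod_range_succ]; rfl

lemma qfact_zero : qfact 0 = 1 := by simp [qfact]

lemma qfact_ne_zero (n : ℕ) : qfact n ≠ 0 := by
  induction n with
  | zero => simp [qfact_zero]
  | succ k ih =>
    rw [qfact_succ]
    exact mul_ne_zero ih (qint_ne_zero (by positivity))

lemma qfact_one : qfact 1 = 1 := by
  rw [qfact_succ, qfact_zero, one_mul]; simpa using qint_one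

lemma zpow_sub_expand (a b : ℤ) : vq ^ (a - b) = vq ^ a * vq ^ (-b) := by
  rw [sub_eq_add_neg, zpow_add₀ vq_ne_zero]

lemma qint_two : qint 2 = vq + vq⁻¹ := by
  apply mul_right_cancel₀ qvsub_ne_zero
  rw [qint_mul_denom]
  have h1 : vq ^ (2:ℤ) = vq * vq := by rw [zpow_two]
  have h2 : vq ^ (-2:ℤ) = vq⁻¹ * vq⁻¹ := by
    rw [show (-2 : ℤ) = (-1) + (-1) by norm_num, zpow_add₀ vq_ne_zero]; simp
  rw [h1, h2]; field_simp; ring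

lemma qint_pascal (m t : ℤ) :
    qint (m + 1 - t) + vq ^ (m + 1) * qint t = vq ^ t * qint (m + 1) := by
  apply mul_right_cancel₀ qvsub_ne_zero
  rw [add_mul, mul_assoc, mul_assoc, qint_mul_denom, qint_mul_denom, qint_mul_denom]
  simp only [neg_sub, neg_add, zpow_sub₀ vq_ne_zero, zpow_add₀ vq_ne_zero, zpow_neg, zpow_one]
  have ha : vq ^ m ≠ 0 := zpow_ne_zero _ vq_ne_zero
  have hb : vq ^ t ≠ 0 := zpow_ne_zero _ vq_ne_zero
  have hv : vq ≠ 0 := vq_ne_zero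
  generalize vq ^ m = av at ha ⊢
  generalize vq ^ t = bv at hb ⊢
  field_simp
  ring

lemma qint_succ_expand (a : ℤ) : vq ^ a + vq⁻¹ * qint a = qint (a + 1) := by
  apply mul_right_cancel₀ qvsub_ne_zero
  rw [add_mul, mul_assoc, qint_mul_denom, qint_mul_denom]
  simp only [neg_add, zpow_add₀ vq_ne_zero, zpow_neg, zpow_one]
  have hb : vq ^ a ≠ 0 := zpow_ne_zero _ vq_ne_zero
  have hv : vq ≠ 0 := vq_ne_zero
  generalize vq ^ a = bv at hb ⊢
  field_simp
  ring

lemma qbinom_one_zero : qbinom 1 0 = 1 := by simp [qbinom, qfact_zero, qfact_one]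
lemma qbinom_one_one : qbinom 1 1 = 1 := by simp [qbinom, qfact_zero, qfact_one]
lemma qbinom_two_zero : qbinom 2 0 = 1 := by
  simp [qbinom, qfact_zero, div_self (qfact_ne_zero 2)]
lemma qbinom_two_two : qbinom 2 2 = 1 := by
  simp [qbinom, qfact_zero, div_self (qfact_ne_zero 2)]
lemma qbinom_two_one : qbinom 2 1 = qint 2 := by
  have h : qfact 2 = qint 2 := by
    rw [show (2:ℕ) = 1 + 1 from rfl, qfact_succ, qfact_one, one_mul]; norm_num
  simp [qbinom, qfact_one, h]

end Scalars
section Core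

variable {A : Type} [Ring A] [Algebra Kq A]

/-- `B c x = F x − v^c x F`. -/
def Bop (F : A) (c : ℤ) (x : A) : A := F * x - vq ^ c • (x * F)

lemma Bop_comm (F : A) (c d : ℤ) (x : A) : Bop F c (Bop F d x) = Bop F d (Bop F c x) := by
  simp only [Bop, mul_sub, sub_mul, smul_sub, mul_smul_comm, smul_mul_assoc, smul_smul,
    mul_assoc]
  rw [mul_comm (vq ^ c) (vq ^ d)]
  abel

lemma Bop_smul (F : A) (c : ℤ) (s : Kq) (x : A) : Bop F c (s • x) = s • Bop F c x := by
  simp only [Bop, mul_smul_comm, smul_mul_assoc, smul_sub, smul_smul, mul_comm s]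

/-- iterated application, head applied last (outermost). -/
def BopL (F : A) : List ℤ → A → A
  | [], x => x
  | c :: l, x => Bop F c (BopL F l x)

lemma BopL_Bop (F : A) (l : List ℤ) (c : ℤ) (x : A) :
    BopL F l (Bop F c x) = Bop F c (BopL F l x) := by
  induction l with
  | nil => rfl
  | cons d l ih => simp only [BopL, ih, Bop_comm]

lemma BopL_append (F : A) (l₁ l₂ : List ℤ) (x : A) :
    BopL F (l₁ ++ l₂) x = BopL F l₁ (BopL F l₂ x) := by
  induction l₁ with
  | nil => rfl
  | cons c l ih =>
    rw [List.cons_append]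
    show Bop F c (BopL F (l ++ l₂) x) = Bop F c (BopL F l (BopL F l₂ x))
    rw [ih]

lemma BopL_reverse (F : A) (l : List ℤ) (x : A) :
    BopL F l.reverse x = BopL F l x := by
  induction l with
  | nil => rfl
  | cons c l ih =>
    simp only [List.reverse_cons, BopL_append, BopL, BopL_Bop]
    rw [ih]

lemma BopL_smul (F : A) (l : List ℤ) (s : Kq) (x : A) :
    BopL F l (s • x) = s • BopL F l x := by
  induction l with
  | nil => rfl
  | cons c l ih => simp only [BopL, ih, Bop_smul]

variable (F G : A)

/-- the `v`-commutator `H = FG − v GF`. -/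
def Hcomm : A := F * G - vq • (G * F)

section SerreConsequences

variable (serre1 : F * F * G + G * (F * F) = qint 2 • (F * G * F))
variable (serre2 : G * G * F + F * (G * G) = qint 2 • (G * F * G))

include serre1 in
lemma F_Hcomm : F * Hcomm F G = vq⁻¹ • (Hcomm F G * F) := by
  have s1 : F * (F * G) + G * (F * F) = qint 2 • (F * (G * F)) := by
    simpa only [mul_assoc] using serre1
  have e1 : F * (F * G) = qint 2 • (F * (G * F)) - G * (F * F) := eq_sub_of_add_eq s1
  simp only [Hcomm, mul_sub, sub_mul, smul_sub, mul_smul_comm, smul_mul_assoc, smul_smul,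
    mul_assoc]
  rw [inv_mul_cancel₀ vq_ne_zero, one_smul, e1, qint_two, add_smul]
  abel

include serre2 in
lemma Hcomm_G : Hcomm F G * G = vq⁻¹ • (G * Hcomm F G) := by
  have s2 : G * (G * F) + F * (G * G) = qint 2 • (G * (F * G)) := by
    simpa only [mul_assoc] using serre2
  have e1 : F * (G * G) = qint 2 • (G * (F * G)) - G * (G * F) := by
    rw [← s2]; abel
  simp only [Hcomm, mul_sub, sub_mul, smul_sub, mul_smul_comm, smul_mul_assoc, smul_smul,
    mul_assoc]
  rw [inv_mul_cancel₀ vq_ne_zero, one_smul, e1, qint_two, add_smul]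
  abel

include serre1 in
lemma F_Hpow (k : ℕ) : F * (Hcomm F G) ^ k = vq ^ (-(k:ℤ)) • ((Hcomm F G) ^ k * F) := by
  induction k with
  | zero => simp
  | succ k ih =>
    rw [pow_succ, ← mul_assoc, ih, smul_mul_assoc, mul_assoc, F_Hcomm F G serre1,
      mul_smul_comm, smul_smul, ← mul_assoc, ← pow_succ]
    congr 1
    rw [show (vq⁻¹ : Kq) = vq ^ (-1 : ℤ) by simp, ← zpow_add₀ vq_ne_zero]
    congr 1
    push_cast; ring

include serre2 in
lemma Hcomm_Gpow (a : ℕ) : Hcomm F G * G ^ a = vq ^ (-(a:ℤ)) • (G ^ a * Hcomm F G) := by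
  induction a with
  | zero => simp
  | succ a ih =>
    rw [pow_succ, ← mul_assoc, ih, smul_mul_assoc, mul_assoc, Hcomm_G F G serre2,
      mul_smul_comm, smul_smul, ← mul_assoc, ← pow_succ]
    congr 1
    rw [show (vq⁻¹ : Kq) = vq ^ (-1 : ℤ) by simp, ← zpow_add₀ vq_ne_zero]
    congr 1
    push_cast; ring

include serre1 serre2 in
lemma F_Gpow (a : ℕ) :
    F * G ^ a = vq ^ (a:ℤ) • (G ^ a * F) + qint a • (G ^ (a - 1) * Hcomm F G) := by
  induction a with
  | zero => simp [qint_zero]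
  | succ a ih =>
    have hFG : F * G = vq • (G * F) + Hcomm F G := by rw [Hcomm]; abel
    have step1 : F * G ^ (a+1) = vq ^ (a:ℤ) • (G ^ a * (F * G))
        + qint a • (G ^ (a-1) * (Hcomm F G * G)) := by
      rw [pow_succ, ← mul_assoc, ih, add_mul, smul_mul_assoc, smul_mul_assoc,
        mul_assoc, mul_assoc]
    rw [step1, hFG, Hcomm_G F G serre2]
    rcases Nat.eq_zero_or_pos a with rfl | ha
    · simp only [Nat.cast_zero, zpow_zero, one_smul, pow_zero, one_mul, qint_zero,
        zero_smul, add_zero, Nat.cast_one, Nat.zero_add, Nat.sub_self, qint_one,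
        zpow_one, smul_add, pow_one]
    · have e1 : G ^ a * (vq • (G * F) + Hcomm F G)
          = vq • (G ^ (a+1) * F) + G ^ a * Hcomm F G := by
        rw [mul_add, mul_smul_comm, ← mul_assoc, ← pow_succ]
      have e2 : G ^ (a-1) * (vq⁻¹ • (G * Hcomm F G)) = vq⁻¹ • (G ^ a * Hcomm F G) := by
        rw [mul_smul_comm, ← mul_assoc]
        congr 2
        rw [← pow_succ]
        congr 1
        omega
      rw [e1, e2, smul_add, smul_smul, smul_smul]
      have c1 : vq ^ (a:ℤ) * vq = vq ^ (((a+1:ℕ)):ℤ) := by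
        rw [show (((a+1:ℕ)):ℤ) = (a:ℤ) + 1 by push_cast; ring, zpow_add₀ vq_ne_zero,
          zpow_one]
      have c2 : vq ^ (a:ℤ) + qint a * vq⁻¹ = qint (((a+1:ℕ)):ℤ) := by
        rw [show (((a+1:ℕ)):ℤ) = (a:ℤ) + 1 by push_cast; ring, ← qint_succ_expand]
        ring
      rw [c1, show (a + 1 - 1 : ℕ) = a by omega, ← c2, add_smul]
      abel

include serre1 serre2 in
lemma Bop_Ystep (n k : ℕ) (hk : k < n) :
    Bop F ((n:ℤ) - 2*k) (G ^ (n-k) * (Hcomm F G) ^ k)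
      = qint ((n:ℤ) - k) • (G ^ (n-k-1) * (Hcomm F G) ^ (k+1)) := by
  rw [Bop, ← mul_assoc, F_Gpow F G serre1 serre2 (n-k), add_mul, smul_mul_assoc,
    smul_mul_assoc, mul_assoc, F_Hpow F G serre1 k, mul_smul_comm, smul_smul,
    mul_assoc, ← pow_succ']
  have c1 : vq ^ (((n-k:ℕ)):ℤ) * vq ^ (-(k:ℤ)) = vq ^ ((n:ℤ) - 2*k) := by
    rw [← zpow_add₀ vq_ne_zero]
    congr 1
    omega
  have c2 : qint (((n-k:ℕ)):ℤ) = qint ((n:ℤ) - k) := by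
    congr 1
    omega
  rw [c1, c2, ← mul_assoc, ← smul_mul_assoc]
  abel

include serre1 in
lemma Bop_Hn (n : ℕ) : Bop F (-(n:ℤ)) ((Hcomm F G) ^ n) = 0 := by
  rw [Bop, F_Hpow F G serre1 n, sub_self]

/-- the exponent list: `Lc n m = [2(m−1)−n, …, 2−n, −n]`. -/
def Lc (n : ℤ) : ℕ → List ℤ
  | 0 => []
  | m + 1 => (2*m - n) :: Lc n m

include serre1 serre2 in
lemma descent (n : ℕ) : ∀ k ≤ n,
    BopL F ((Lc (n:ℤ) (k+1)).reverse) (G ^ k * (Hcomm F G) ^ (n-k)) = 0 := by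
  intro k
  induction k with
  | zero =>
    intro _
    show BopL F ([(2*(0:ℕ) - (n:ℤ))].reverse) _ = 0
    simp only [List.reverse_singleton, BopL, pow_zero, one_mul, Nat.sub_zero]
    rw [show (2*(0:ℕ) - (n:ℤ)) = -(n:ℤ) by push_cast; ring]
    exact Bop_Hn F G serre1 n
  | succ k ih =>
    intro hk
    show BopL F (((2*((k:ℕ)+1:ℕ) - (n:ℤ)) :: Lc (n:ℤ) (k+1)).reverse) _ = 0
    rw [List.reverse_cons, BopL_append]
    show BopL F ((Lc (n:ℤ) (k+1)).reverse)
      (BopL F [(2*((k:ℕ)+1:ℕ) - (n:ℤ))] (G ^ (k+1) * (Hcomm F G) ^ (n-(k+1)))) = 0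
    show BopL F ((Lc (n:ℤ) (k+1)).reverse)
      (Bop F (2*((k:ℕ)+1:ℕ) - (n:ℤ)) (G ^ (k+1) * (Hcomm F G) ^ (n-(k+1)))) = 0
    have hy := Bop_Ystep F G serre1 serre2 n (n-(k+1)) (by omega)
    rw [show ((n:ℤ) - 2*((n-(k+1):ℕ):ℤ)) = 2*((k:ℕ)+1:ℕ) - (n:ℤ) by push_cast; omega,
      show (n - (n-(k+1)) : ℕ) = k+1 by omega] at hy
    rw [hy, BopL_smul]
    rw [show (k + 1 - 1 : ℕ) = k by omega, show ((n-(k+1)) + 1 : ℕ) = n - k by omega]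
    rw [ih (by omega), smul_zero]

include serre1 serre2 in
theorem core_vanish (n : ℕ) : BopL F (Lc (n:ℤ) (n+1)) (G ^ n) = 0 := by
  rw [← BopL_reverse]
  have := descent F G serre1 serre2 n n le_rfl
  rw [Nat.sub_self, pow_zero, mul_one] at this
  exact this

end SerreConsequences

end Core
section SZsec

variable {A : Type} [Ring A] [Algebra Kq A]

/-- divided power -/
def Pdiv (F : A) (k : ℕ) : A := (qfact k)⁻¹ • F ^ k

lemma Pdiv_zero (F : A) : Pdiv F 0 = 1 := by simp [Pdiv, qfact_zero]

lemma F_mul_Pdiv (F : A) (k : ℕ) : F * Pdiv F k = qint ((k:ℤ)+1) • Pdiv F (k+1) := by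
  rw [Pdiv, Pdiv, mul_smul_comm, ← pow_succ', smul_smul]
  congr 1
  rw [qfact_succ, mul_inv]
  rw [mul_comm (qfact k)⁻¹, ← mul_assoc]
  rw [mul_inv_cancel₀ (qint_ne_zero (by positivity)), one_mul]

lemma Pdiv_mul_F (F : A) (k : ℕ) : Pdiv F k * F = qint ((k:ℤ)+1) • Pdiv F (k+1) := by
  rw [Pdiv, Pdiv, smul_mul_assoc, ← pow_succ, smul_smul]
  congr 1
  rw [qfact_succ, mul_inv]
  rw [mul_comm (qfact k)⁻¹, ← mul_assoc]
  rw [mul_inv_cancel₀ (qint_ne_zero (by positivity)), one_mul]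

/-- the coefficient in the sum -/
def cSZ (dd : ℤ) (m t : ℕ) : Kq := ((-1 : Kq) ^ t) * vq ^ (-(t : ℤ) * ((dd + 1) - (m : ℤ)))

/-- the sum `S_m(Z)` -/
def SZ (F Z : A) (dd : ℤ) (m : ℕ) : A :=
  ∑ t ∈ Finset.range (m + 1), cSZ dd m t • (Pdiv F (m - t) * Z * Pdiv F t)

lemma cSZ_zero (dd : ℤ) (m : ℕ) : cSZ dd m 0 = 1 := by
  simp [cSZ]

lemma SZ_zero (F Z : A) (dd : ℤ) : SZ F Z dd 0 = Z := by
  simp [SZ, cSZ, Pdiv_zero]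

lemma SZ_Zsmul (F Z : A) (s : Kq) (dd : ℤ) (m : ℕ) :
    SZ F (s • Z) dd m = s • SZ F Z dd m := by
  simp only [SZ, Finset.smul_sum, mul_smul_comm, smul_mul_assoc, smul_smul, mul_comm s]

-- scalar identities
lemma coeff_identity (dd : ℤ) (m t : ℕ) :
    cSZ dd m (t+1) * qint ((m:ℤ) - t) =
      qint ((m:ℤ) + 1) * cSZ dd (m+1) (t+1)
        + vq ^ (2*(m:ℤ) - dd) * cSZ dd m t * qint ((t:ℤ) + 1) := by
  have hp : qint ((m:ℤ) + 1 - ((t:ℤ)+1)) =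
      vq ^ ((t:ℤ)+1) * qint ((m:ℤ)+1) - vq ^ ((m:ℤ)+1) * qint ((t:ℤ)+1) :=
    eq_sub_of_add_eq (qint_pascal (m:ℤ) ((t:ℤ)+1))
  rw [show (m:ℤ) - t = (m:ℤ) + 1 - ((t:ℤ)+1) by ring] at *
  rw [hp]
  simp only [cSZ, pow_succ]
  push_cast
  have d1 : vq ^ (-((t:ℤ)+1) * ((dd + 1) - (m:ℤ))) =
      vq ^ (-(t:ℤ) * ((dd + 1) - (m:ℤ))) * vq ^ ((m:ℤ) - dd - 1) := by
    rw [← zpow_add₀ vq_ne_zero]; congr 1; ring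
  have d2 : vq ^ (-((t:ℤ)+1) * ((dd + 1) - ((m:ℤ)+1))) =
      vq ^ (-(t:ℤ) * ((dd + 1) - (m:ℤ))) * vq ^ ((m:ℤ) - dd - 1) * vq ^ ((t:ℤ)+1) := by
    rw [← zpow_add₀ vq_ne_zero, ← zpow_add₀ vq_ne_zero]; congr 1; ring
  have d4 : vq ^ (2*(m:ℤ) - dd) = vq ^ ((m:ℤ)+1) * vq ^ ((m:ℤ) - dd - 1) := by
    rw [← zpow_add₀ vq_ne_zero]; congr 1; ring
  rw [d1, d2, d4]
  ring

lemma coeff_boundary (dd : ℤ) (m : ℕ) :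
    qint ((m:ℤ) + 1) * cSZ dd (m+1) (m+1)
      + vq ^ (2*(m:ℤ) - dd) * cSZ dd m m * qint ((m:ℤ) + 1) = 0 := by
  simp only [cSZ, pow_succ]
  push_cast
  have d1 : vq ^ (-((m:ℤ)+1) * ((dd + 1) - ((m:ℤ)+1))) =
      vq ^ (2*(m:ℤ) - dd) * vq ^ (-(m:ℤ) * ((dd + 1) - (m:ℤ))) := by
    rw [← zpow_add₀ vq_ne_zero]; congr 1; ring
  rw [d1]
  ring

end SZsec
section SZsucc

variable {A : Type} [Ring A] [Algebra Kq A]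

lemma SZ_succ (F Z : A) (dd : ℤ) (m : ℕ) :
    F * SZ F Z dd m - vq ^ (2*(m:ℤ) - dd) • (SZ F Z dd m * F)
      = qint ((m:ℤ) + 1) • SZ F Z dd (m+1) := by
  have ha : F * SZ F Z dd m
      = ∑ t ∈ Finset.range (m+1),
          (cSZ dd m t * qint ((m:ℤ) + 1 - (t:ℤ))) • (Pdiv F (m+1-t) * Z * Pdiv F t) := by
    rw [SZ, Finset.mul_sum]
    refine Finset.sum_congr rfl fun t ht => ?_
    have htm : t ≤ m := by simpa [Nat.lt_succ_iff] using ht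
    rw [mul_smul_comm]
    rw [show F * (Pdiv F (m - t) * Z * Pdiv F t) = ((F * Pdiv F (m-t)) * Z) * Pdiv F t by
      simp only [mul_assoc]]
    rw [F_mul_Pdiv, smul_mul_assoc, smul_mul_assoc, smul_smul]
    rw [show ((m - t:ℕ):ℤ) + 1 = (m:ℤ) + 1 - (t:ℤ) by omega]
    rw [show (m - t + 1 : ℕ) = m + 1 - t by omega]
  have hb : vq ^ (2*(m:ℤ) - dd) • (SZ F Z dd m * F)
      = ∑ t ∈ Finset.range (m+1),
          (vq ^ (2*(m:ℤ) - dd) * cSZ dd m t * qint ((t:ℤ) + 1))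
            • (Pdiv F (m-t) * Z * Pdiv F (t+1)) := by
    rw [SZ, Finset.sum_mul, Finset.smul_sum]
    refine Finset.sum_congr rfl fun t ht => ?_
    rw [smul_mul_assoc, mul_assoc, Pdiv_mul_F, mul_smul_comm, smul_smul, smul_smul,
      mul_assoc]
  have hrhs : qint ((m:ℤ) + 1) • SZ F Z dd (m+1)
      = ∑ t ∈ Finset.range (m+2),
          (qint ((m:ℤ)+1) * cSZ dd (m+1) t) • (Pdiv F (m+1-t) * Z * Pdiv F t) := by
    rw [SZ, Finset.smul_sum]
    refine Finset.sum_congr rfl fun t _ => ?_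
    rw [smul_smul]
  rw [ha, hb, hrhs]
  rw [Finset.sum_range_succ' (fun t => (qint ((m:ℤ)+1) * cSZ dd (m+1) t) •
        (Pdiv F (m+1-t) * Z * Pdiv F t)) (m+1)]
  rw [Finset.sum_range_succ' (fun t => (cSZ dd m t * qint ((m:ℤ) + 1 - (t:ℤ))) •
        (Pdiv F (m+1-t) * Z * Pdiv F t)) m]
  simp only [Nat.succ_sub_succ, Nat.sub_zero, Nat.cast_zero, Nat.cast_succ]
  rw [Finset.sum_range_succ (fun t => (vq ^ (2*(m:ℤ) - dd) * cSZ dd m t * qint ((t:ℤ) + 1))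
        • (Pdiv F (m-t) * Z * Pdiv F (t+1))) m]
  rw [Finset.sum_range_succ (fun t => (qint ((m:ℤ)+1) * cSZ dd (m+1) (t+1)) •
        (Pdiv F (m-t) * Z * Pdiv F (t+1))) m]
  have hpt : ∀ t ∈ Finset.range m,
      (cSZ dd m (t+1) * qint ((m:ℤ) + 1 - ((t:ℤ)+1))) • (Pdiv F (m-t) * Z * Pdiv F (t+1))
        - (vq ^ (2*(m:ℤ) - dd) * cSZ dd m t * qint ((t:ℤ) + 1))
            • (Pdiv F (m-t) * Z * Pdiv F (t+1))
      = (qint ((m:ℤ)+1) * cSZ dd (m+1) (t+1)) • (Pdiv F (m-t) * Z * Pdiv F (t+1)) := by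
    intro t _
    rw [← sub_smul]
    congr 1
    have hci := coeff_identity dd m t
    rw [show (m:ℤ) - t = (m:ℤ) + 1 - ((t:ℤ)+1) by ring] at hci
    rw [hci]
    ring
  have hAB : (∑ x ∈ Finset.range m, (cSZ dd m (x+1) * qint ((m:ℤ) + 1 - ((x:ℤ)+1))) •
        (Pdiv F (m-x) * Z * Pdiv F (x+1)))
      - ∑ x ∈ Finset.range m, (vq ^ (2*(m:ℤ) - dd) * cSZ dd m x * qint ((x:ℤ) + 1)) •
        (Pdiv F (m-x) * Z * Pdiv F (x+1))
      = ∑ x ∈ Finset.range m, (qint ((m:ℤ)+1) * cSZ dd (m+1) (x+1)) •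
        (Pdiv F (m-x) * Z * Pdiv F (x+1)) := by
    rw [← Finset.sum_sub_distrib]
    exact Finset.sum_congr rfl hpt
  have hbd : -((vq ^ (2*(m:ℤ) - dd) * cSZ dd m m * qint ((m:ℤ) + 1))
        • (Pdiv F (m-m) * Z * Pdiv F (m+1)))
      = (qint ((m:ℤ)+1) * cSZ dd (m+1) (m+1)) • (Pdiv F (m-m) * Z * Pdiv F (m+1)) := by
    rw [← neg_smul]
    congr 1
    linear_combination -coeff_boundary dd m
  have h0 : (cSZ dd m 0 * qint ((m:ℤ) + 1 - 0)) • (Pdiv F (m+1) * Z * Pdiv F 0)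
      = (qint ((m:ℤ)+1) * cSZ dd (m+1) 0) • (Pdiv F (m+1) * Z * Pdiv F 0) := by
    congr 1
    rw [cSZ_zero, cSZ_zero, sub_zero]
    ring
  rw [← hAB, ← hbd, ← h0]
  abel

end SZsucc
section SZlink

variable {A : Type} [Ring A] [Algebra Kq A]

lemma SZ_eq_BopL (F Z : A) (n : ℕ) : ∀ m : ℕ,
    SZ F Z (n:ℤ) m = (qfact m)⁻¹ • BopL F (Lc (n:ℤ) m) Z := by
  intro m
  induction m with
  | zero => rw [SZ_zero, qfact_zero, inv_one, one_smul]; rfl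
  | succ m ih =>
    have key := SZ_succ F Z (n:ℤ) m
    rw [ih] at key
    rw [mul_smul_comm, smul_mul_assoc, smul_comm (vq ^ (2*(m:ℤ) - (n:ℤ))) (qfact m)⁻¹,
      ← smul_sub] at key
    have hq : qint ((m:ℤ)+1) ≠ 0 := qint_ne_zero (by positivity)
    have e1 : SZ F Z (n:ℤ) (m+1)
        = (qint ((m:ℤ)+1))⁻¹ • ((qfact m)⁻¹ • (F * BopL F (Lc (n:ℤ) m) Z
            - vq ^ (2*(m:ℤ) - (n:ℤ)) • (BopL F (Lc (n:ℤ) m) Z * F))) := by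
      rw [key, inv_smul_smul₀ hq]
    rw [e1, smul_smul]
    have e2 : (qint ((m:ℤ)+1))⁻¹ * (qfact m)⁻¹ = (qfact (m+1))⁻¹ := by
      rw [qfact_succ, mul_inv, mul_comm]
    rw [e2]
    rfl

lemma SZ_vanish (F G : A)
    (serre1 : F * F * G + G * (F * F) = qint 2 • (F * G * F))
    (serre2 : G * G * F + F * (G * G) = qint 2 • (G * F * G))
    (n : ℕ) : SZ F (Pdiv G n) ((n:ℕ):ℤ) (n+1) = 0 := by
  rw [Pdiv, SZ_Zsmul, SZ_eq_BopL, core_vanish F G serre1 serre2 n, smul_zero, smul_zero]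

lemma SZ_factor (F Z C₁ C₂ : A) (h1 : Commute F C₁) (h2 : Commute F C₂) (dd : ℤ) (m : ℕ) :
    SZ F (C₁ * Z * C₂) dd m = C₁ * SZ F Z dd m * C₂ := by
  rw [SZ, SZ, Finset.mul_sum, Finset.sum_mul]
  refine Finset.sum_congr rfl fun t _ => ?_
  have hc1 : Commute (Pdiv F (m-t)) C₁ := (h1.pow_left (m-t)).smul_left _
  have hc2 : Commute (Pdiv F t) C₂ := (h2.pow_left t).smul_left _
  rw [mul_smul_comm, smul_mul_assoc]
  congr 1
  calc Pdiv F (m-t) * (C₁ * Z * C₂) * Pdiv F t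
      = (Pdiv F (m-t) * C₁) * (Z * (C₂ * Pdiv F t)) := by simp only [mul_assoc]
    _ = (C₁ * Pdiv F (m-t)) * (Z * (Pdiv F t * C₂)) := by rw [hc1.eq, ← hc2.eq]
    _ = C₁ * (Pdiv F (m-t) * Z * Pdiv F t) * C₂ := by simp only [mul_assoc]

end SZlink
section GraphLemmas

variable {J : Type}

lemma word_nil (GG : GraphData J) : word GG [] = 1 := rfl

lemma word_cons (GG : GraphData J) (k : J) (l : List J) :
    word GG (k :: l) = θ GG k * word GG l := by simp [word]

lemma word_append (GG : GraphData J) (l₁ l₂ : List J) :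
    word GG (l₁ ++ l₂) = word GG l₁ * word GG l₂ := by simp [word]

lemma word_replicate (GG : GraphData J) (m : ℕ) (i : J) :
    word GG (List.replicate m i) = θ GG i ^ m := by
  induction m with
  | zero => simp [word]
  | succ m ih => rw [List.replicate_succ, word_cons, ih, pow_succ']

lemma degw_cons (k : J) (l : List J) :
    degw (k :: l) = Finsupp.single k 1 + degw l := by simp [degw]

lemma degw_append (l₁ l₂ : List J) : degw (l₁ ++ l₂) = degw l₁ + degw l₂ := by
  simp [degw]

lemma degw_replicate (m : ℕ) (i : J) :
    degw (List.replicate m i) = Finsupp.single i m := by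
  induction m with
  | zero => simp [degw]
  | succ m ih =>
    rw [List.replicate_succ, degw_cons, ih, ← Finsupp.single_add]
    congr 1
    omega

lemma pairing_single (GG : GraphData J) (i : J) (m : ℕ) :
    pairing GG i (Finsupp.single i m) = 2 * (m:ℤ) := by
  rw [pairing, Finsupp.sum_single_index (by simp)]
  simp [cart]
  ring

lemma mem_homog_pow (GG : GraphData J) (i : J) (m : ℕ) :
    θ GG i ^ m ∈ homog GG (Finsupp.single i m) :=
  Submodule.subset_span ⟨List.replicate m i, degw_replicate m i, (word_replicate GG m i).symm⟩

lemma mem_homog_word_mul (GG : GraphData J) (l : List J) (j : J) (p : ℕ) :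
    word GG l * θ GG j ^ p ∈ homog GG (degw l + Finsupp.single j p) :=
  Submodule.subset_span ⟨l ++ List.replicate p j,
    by rw [degw_append, degw_replicate],
    by rw [word_append, word_replicate]⟩

lemma θdiv_eq_Pdiv (GG : GraphData J) (i : J) (n : ℕ) : θdiv GG i n = Pdiv (θ GG i) n := rfl

lemma θdiv_mem_homog (GG : GraphData J) (i : J) (m : ℕ) :
    θdiv GG i m ∈ homog GG (Finsupp.single i m) :=
  Submodule.smul_mem _ _ (mem_homog_pow GG i m)

lemma serre_image_zero (GG : GraphData J) {i j : J} (hij : i ≠ j) :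
    RingQuot.mkAlgHom Kq (SerreRel GG) (serreElem GG i j) = 0 := by
  rw [RingQuot.mkAlgHom_rel Kq (SerreRel.serre i j hij), map_zero]

end GraphLemmas
section GraphLemmas2

variable {J : Type}

lemma theta_commute (GG : GraphData J) {i j : J} (hij : i ≠ j) (hE : GG.E i j = 0) :
    Commute (θ GG i) (θ GG j) := by
  have h := serre_image_zero GG hij
  rw [serreElem, hE] at h
  rw [Finset.sum_range_succ, Finset.sum_range_one] at h
  norm_num [qbinom_one_zero, qbinom_one_one] at h
  have h' : θ GG j * θ GG i + -(θ GG i * θ GG j) = 0 := h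
  have h'' : θ GG j * θ GG i = θ GG i * θ GG j :=
    eq_of_sub_eq_zero (by rwa [sub_eq_add_neg])
  exact h''.symm

lemma serre_triple (GG : GraphData J) {i j : J} (hij : i ≠ j) (hE : GG.E i j = 1) :
    θ GG i * θ GG i * θ GG j + θ GG j * (θ GG i * θ GG i)
      = qint 2 • (θ GG i * θ GG j * θ GG i) := by
  have h := serre_image_zero GG hij
  rw [serreElem, hE] at h
  rw [Finset.sum_range_succ, Finset.sum_range_succ, Finset.sum_range_one] at h
  norm_num [qbinom_two_zero, qbinom_two_one, qbinom_two_two] at h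
  simp only [map_add, map_neg, map_mul, map_smul, map_pow, pow_two] at h
  have h' : θ GG j * (θ GG i * θ GG i) + -(qint 2 • (θ GG i * θ GG j * θ GG i))
      + θ GG i * θ GG i * θ GG j = 0 := h
  rw [← sub_eq_zero]
  rw [show θ GG i * θ GG i * θ GG j + θ GG j * (θ GG i * θ GG i)
      - qint 2 • (θ GG i * θ GG j * θ GG i)
    = θ GG j * (θ GG i * θ GG i) + -(qint 2 • (θ GG i * θ GG j * θ GG i))
      + θ GG i * θ GG i * θ GG j by abel]
  exact h'

end GraphLemmas2

section Framed

variable (G : GraphData I)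

lemma serre1F (i : I) :
    θ (framed G) (Sum.inl i) * θ (framed G) (Sum.inl i) * θ (framed G) (Sum.inr i)
      + θ (framed G) (Sum.inr i) * (θ (framed G) (Sum.inl i) * θ (framed G) (Sum.inl i))
      = qint 2 • (θ (framed G) (Sum.inl i) * θ (framed G) (Sum.inr i)
          * θ (framed G) (Sum.inl i)) :=
  serre_triple (framed G) (by simp) (by simp [framed])

lemma serre2F (i : I) :
    θ (framed G) (Sum.inr i) * θ (framed G) (Sum.inr i) * θ (framed G) (Sum.inl i)
      + θ (framed G) (Sum.inl i) * (θ (framed G) (Sum.inr i) * θ (framed G) (Sum.inr i))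
      = qint 2 • (θ (framed G) (Sum.inr i) * θ (framed G) (Sum.inl i)
          * θ (framed G) (Sum.inr i)) :=
  serre_triple (framed G) (by simp) (by simp [framed])

lemma commF {i j : I} (h : j ≠ i) :
    Commute (θ (framed G) (Sum.inl i)) (θ (framed G) (Sum.inr j)) :=
  theta_commute (framed G) (by simp) (by simp [framed, h.symm])

lemma θframe_factor (d : I → ℕ) (i : I) : ∃ C₁ C₂ : UM (framed G),
    θframe G d = C₁ * Pdiv (θ (framed G) (Sum.inr i)) (d i) * C₂ ∧
    Commute (θ (framed G) (Sum.inl i)) C₁ ∧ Commute (θ (framed G) (Sum.inl i)) C₂ := by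
  have hmem : i ∈ Finset.univ.toList (α := I) := by simp
  obtain ⟨l₁, l₂, hsplit⟩ := List.append_of_mem hmem
  have hnd : (Finset.univ.toList (α := I)).Nodup := Finset.nodup_toList _
  rw [hsplit, List.nodup_append] at hnd
  have h1 : i ∉ l₁ := fun hmem' => hnd.2.2 i hmem' i List.mem_cons_self rfl
  have h2 : i ∉ l₂ := (List.nodup_cons.mp hnd.2.1).1
  refine ⟨((l₁.map fun j => θdiv (framed G) (Sum.inr j) (d j))).prod,
          ((l₂.map fun j => θdiv (framed G) (Sum.inr j) (d j))).prod, ?_, ?_, ?_⟩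
  · rw [θframe, hsplit, List.map_append, List.prod_append, List.map_cons, List.prod_cons,
      ← mul_assoc]
    rfl
  · apply Commute.list_prod_right
    intro y hy
    obtain ⟨j, hj, rfl⟩ := List.mem_map.mp hy
    have hji : j ≠ i := fun hh => h1 (hh ▸ hj)
    exact ((commF G hji).pow_right _).smul_right _
  · apply Commute.list_prod_right
    intro y hy
    obtain ⟨j, hj, rfl⟩ := List.mem_map.mp hy
    have hji : j ≠ i := fun hh => h2 (hh ▸ hj)
    exact ((commF G hji).pow_right _).smul_right _

end Framed
set_option synthInstance.maxHeartbeats 1000000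
set_option maxHeartbeats 1000000

section Master

variable (G : GraphData I) (d : I → ℕ)
variable (ι : UM G →ₐ[Kq] UM (framed G))
variable (hι : ∀ j : I, ι (θ G j) = θ (framed G) (Sum.inl j))
variable (KmL : I → (UM G →ₗ[Kq] UM G))
variable (hKmL : ∀ i, IsVermaKm G (fun j => (d j : ℤ)) i (KmL i))
variable (Φ : (UM G ⊗[Kq] UM G) →ₗ[Kq] UM (framed G))
variable (hΦ1 : ∀ x : UM G, Φ (x ⊗ₜ[Kq] 1) = θframe G d * ι x)
variable (hΦF : ∀ (i : I) (x y : UM G),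
      Φ ((θ G i * x) ⊗ₜ[Kq] KmL i y) + Φ (x ⊗ₜ[Kq] (θ G i * y)) =
        θ (framed G) (Sum.inl i) * Φ (x ⊗ₜ[Kq] y))

include hι hKmL hΦ1 hΦF in
lemma master_formula (i : I) : ∀ (m : ℕ) (y : UM G),
    Φ (y ⊗ₜ[Kq] θdiv G i m)
      = SZ (θ (framed G) (Sum.inl i)) (θframe G d) ((d i : ℤ)) m * ι y := by
  intro m
  induction m with
  | zero =>
    intro y
    rw [θdiv_eq_Pdiv, Pdiv_zero, SZ_zero, hΦ1]
  | succ m ih =>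
    intro y
    have hre := hΦF i y (θdiv G i m)
    rw [hKmL i (Finsupp.single i m) (θdiv G i m) (θdiv_mem_homog G i m),
      pairing_single] at hre
    beta_reduce at hre
    rw [show θ G i * θdiv G i m = qint ((m:ℤ)+1) • θdiv G i (m+1) from
      F_mul_Pdiv (θ G i) m] at hre
    rw [TensorProduct.tmul_smul, TensorProduct.tmul_smul, map_smul, map_smul] at hre
    rw [ih, ih, map_mul, hι] at hre
    rw [show -((d i : ℤ) - 2*(m:ℤ)) = 2*(m:ℤ) - (d i : ℤ) by ring] at hre
    have key := SZ_succ (θ (framed G) (Sum.inl i)) (θframe G d) ((d i : ℤ)) m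
    have hq : qint ((m:ℤ)+1) ≠ 0 := qint_ne_zero (by positivity)
    have h2 : qint ((m:ℤ)+1) • Φ (y ⊗ₜ[Kq] θdiv G i (m+1))
        = (qint ((m:ℤ)+1) • SZ (θ (framed G) (Sum.inl i)) (θframe G d) ((d i : ℤ)) (m+1))
            * ι y := by
      rw [← key]
      rw [eq_sub_of_add_eq' hre]
      simp only [sub_mul, smul_mul_assoc, mul_assoc]
    calc Φ (y ⊗ₜ[Kq] θdiv G i (m+1))
        = (qint ((m:ℤ)+1))⁻¹ • (qint ((m:ℤ)+1) • Φ (y ⊗ₜ[Kq] θdiv G i (m+1))) :=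
          (inv_smul_smul₀ hq _).symm
      _ = (qint ((m:ℤ)+1))⁻¹ • ((qint ((m:ℤ)+1) •
            SZ (θ (framed G) (Sum.inl i)) (θframe G d) ((d i : ℤ)) (m+1)) * ι y) := by
          rw [h2]
      _ = SZ (θ (framed G) (Sum.inl i)) (θframe G d) ((d i : ℤ)) (m+1) * ι y := by
          rw [smul_mul_assoc, inv_smul_smul₀ hq]

include hι hKmL hΦ1 hΦF in
lemma master_vanish (i : I) (y : UM G) : Φ (y ⊗ₜ[Kq] θdiv G i (d i + 1)) = 0 := by
  rw [master_formula G d ι hι KmL hKmL Φ hΦ1 hΦF i (d i + 1) y]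
  obtain ⟨C₁, C₂, hfac, hc1, hc2⟩ := θframe_factor G d i
  rw [hfac, SZ_factor _ _ _ _ hc1 hc2,
    SZ_vanish _ _ (serre1F G i) (serre2F G i) (d i)]
  simp

include hι hKmL hΦ1 hΦF in
lemma master_kill (j : I) : ∀ (l : List I) (y : UM G),
    Φ (y ⊗ₜ[Kq] (word G l * θdiv G j (d j + 1))) = 0 := by
  intro l
  induction l with
  | nil =>
    intro y
    rw [word_nil, one_mul]
    exact master_vanish G d ι hι KmL hKmL Φ hΦ1 hΦF j y
  | cons k l ih =>
    intro y
    have hzh : word G l * θdiv G j (d j + 1)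
        ∈ homog G (degw l + Finsupp.single j (d j + 1)) := by
      rw [θdiv_eq_Pdiv, Pdiv, mul_smul_comm]
      exact Submodule.smul_mem _ _ (mem_homog_word_mul G l j (d j + 1))
    have hre := hΦF k y (word G l * θdiv G j (d j + 1))
    rw [hKmL k _ _ hzh] at hre
    beta_reduce at hre
    rw [TensorProduct.tmul_smul, map_smul] at hre
    rw [ih, ih, smul_zero, zero_add, mul_zero] at hre
    rw [word_cons, mul_assoc]
    exact hre

lemma span_words (G : GraphData I) (x : UM G) :
    x ∈ Submodule.span Kq {w : UM G | ∃ l, w = word G l} := by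
  obtain ⟨a, rfl⟩ := RingQuot.mkAlgHom_surjective Kq (SerreRel G) x
  induction a using FreeAlgebra.induction with
  | grade0 r =>
    rw [AlgHom.commutes, Algebra.algebraMap_eq_smul_one]
    exact Submodule.smul_mem _ _ (Submodule.subset_span ⟨[], rfl⟩)
  | grade1 z =>
    exact Submodule.subset_span ⟨[z], by simp [word]; rfl⟩
  | mul a b ha hb =>
    rw [map_mul]
    have hmm := Submodule.mul_mem_mul ha hb
    rw [Submodule.span_mul_span] at hmm
    refine Submodule.span_le.mpr ?_ hmm
    rintro w ⟨w1, ⟨l1, rfl⟩, w2, ⟨l2, rfl⟩, rfl⟩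
    exact Submodule.subset_span ⟨l1 ++ l2, (word_append G l1 l2).symm⟩
  | add a b ha hb =>
    rw [map_add]
    exact Submodule.add_mem _ ha hb

include hι hKmL hΦ1 hΦF in
lemma master_kill_all (j : I) (x : UM G) (y : UM G) :
    Φ (y ⊗ₜ[Kq] (x * θdiv G j (d j + 1))) = 0 := by
  have hx := span_words G x
  induction hx using Submodule.span_induction with
  | mem w hw =>
    obtain ⟨l, rfl⟩ := hw
    exact master_kill G d ι hι KmL hKmL Φ hΦ1 hΦF j l y
  | zero => rw [zero_mul, TensorProduct.tmul_zero, map_zero]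
  | add a b ha hb iha ihb =>
    rw [add_mul, TensorProduct.tmul_add, map_add, iha, ihb, add_zero]
  | smul s a ha iha =>
    rw [smul_mul_assoc, TensorProduct.tmul_smul, map_smul, iha, smul_zero]

end Master
/-- The induced `U`-module map `φ'_λ : M₀ ⊗ M_λ → K'(d)` (characterized by
`x·ξ₀ ⊗ ξ_λ ↦ θ^d·x` and `U`-equivariance, recorded through the hypotheses below)
kills `M₀ ⊗ T_λ`, where `λ` is dominant with `(i,λ) = d_i` and `T_λ` is the left
ideal generated by the `θ_i^{(i,λ)+1}`.  Concretely,
`φ'_λ(y·ξ₀ ⊗ θ_i^{(m)}ξ_λ) = (Σ_{t=0}^m (−1)^t v^{−t(p−m)} θ_i^{(m−t)} θ^d θ_i^{(t)})·y`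
with `p = (i,λ)+1`, and this vanishes when `m = p`. -/
theorem phi_kills_M0_tensor_T (G : GraphData I) (d : I → ℕ)
    -- the embedding `U⁻_Γ → U⁻_{Γ̃}`:
    (ι : UM G →ₐ[Kq] UM (framed G))
    (hι : ∀ j : I, ι (θ G j) = θ (framed G) (Sum.inl j))
    -- the actions entering the `U`-module structures:
    (E0 EL Kp0 KmL : I → (UM G →ₗ[Kq] UM G))
    (hE0 : ∀ i, IsVermaE G (fun _ => 0) i (E0 i))
    (hEL : ∀ i, IsVermaE G (fun j => (d j : ℤ)) i (EL i))
    (hKp0 : ∀ i, IsVermaKp G (fun _ => 0) i (Kp0 i))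
    (hKmL : ∀ i, IsVermaKm G (fun j => (d j : ℤ)) i (KmL i))
    (EK : I → (UM (framed G) →ₗ[Kq] UM (framed G)))
    (hEK : ∀ i, IsVermaE (framed G) (fun _ => 0) (Sum.inl i) (EK i))
    -- the map `φ'_λ` on `M₀ ⊗ M_λ`:
    (Φ : (UM G ⊗[Kq] UM G) →ₗ[Kq] UM (framed G))
    (hΦ1 : ∀ x : UM G, Φ (x ⊗ₜ[Kq] 1) = θframe G d * ι x)
    -- `Φ` intertwines the `F_i`-actions (via `Δ(F_i) = F_i⊗K_{−i} + 1⊗F_i`):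
    (hΦF : ∀ (i : I) (x y : UM G),
      Φ ((θ G i * x) ⊗ₜ[Kq] KmL i y) + Φ (x ⊗ₜ[Kq] (θ G i * y)) =
        θ (framed G) (Sum.inl i) * Φ (x ⊗ₜ[Kq] y))
    -- `Φ` intertwines the `E_i`-actions (via `Δ(E_i) = E_i⊗1 + K_i⊗E_i`):
    (hΦE : ∀ (i : I) (x y : UM G),
      Φ (E0 i x ⊗ₜ[Kq] y) + Φ (Kp0 i x ⊗ₜ[Kq] EL i y) =
        EK i (Φ (x ⊗ₜ[Kq] y)))
    (i : I) :
    -- the concrete formula: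
    (∀ (y : UM G) (m : ℕ),
      Φ (y ⊗ₜ[Kq] θdiv G i m) =
        (∑ tt ∈ Finset.range (m + 1),
          (((-1 : Kq) ^ tt) * vq ^ (-(tt : ℤ) * (((d i : ℤ) + 1) - (m : ℤ)))) •
            (θdiv (framed G) (Sum.inl i) (m - tt) * θframe G d *
              θdiv (framed G) (Sum.inl i) tt)) * ι y) ∧
    -- vanishing at `m = p = d_i + 1`:
    (∀ y : UM G, Φ (y ⊗ₜ[Kq] θdiv G i (d i + 1)) = 0) ∧
    -- `Φ` kills `M₀ ⊗ T_λ`: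
    (∀ (y x : UM G) (j : I), Φ (y ⊗ₜ[Kq] (x * θdiv G j (d j + 1))) = 0) := by

  refine ⟨fun y m => ?_, fun y => ?_, fun y x j => ?_⟩
  · exact master_formula G d ι hι KmL hKmL Φ hΦ1 hΦF i m y
  · exact master_vanish G d ι hι KmL hKmL Φ hΦ1 hΦF i y
  · exact master_kill_all G d ι hι KmL hKmL Φ hΦ1 hΦF j x y
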